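/- The expected number of iterations for the modified GSEMO (parent selection restricted to points maximising L(x) = LO(x) + TZ(x)) to obtain a first Pareto-optimal search point on LOTZ is at most ∑_{L=0}^{n−2} en/2 = O(n²), regardless of the diversity-based parent-selection mechanism used within the restricted subpopulation. -/

import Mathlib

noncomputable section
open scoped ENNReal
attribute [local instance] Classical.propDecidable

namespace EMO


/-- A bit string of length `n`. -/
abbrev BitString (n : ℕ) := Fin n → Bool

/-- Number of one-bits. -/
def onesCount {n : ℕ} (x : BitString n) : ℕ :=
  (Finset.univ.filter fun i => x i = true).card

def allOnes (n : ℕ) : BitString n := fun _ => true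
def allZeros (n : ℕ) : BitString n := fun _ => false

/-- The bi-objective function OneMinMax. -/
def OneMinMax {n : ℕ} (x : BitString n) : ℤ × ℤ :=
  ((onesCount x : ℤ), (n : ℤ) - (onesCount x : ℤ))

/-- Number of leading ones. -/
def leadingOnes {n : ℕ} (x : BitString n) : ℕ :=
  (Finset.univ.filter fun i : Fin n => ∀ j : Fin n, j ≤ i → x j = true).card

/-- Number of trailing zeros. -/
def trailingZeros {n : ℕ} (x : BitString n) : ℕ :=
  (Finset.univ.filter fun i : Fin n => ∀ j : Fin n, i ≤ j → x j = false).card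

/-- The bi-objective function LOTZ. -/
def LOTZ {n : ℕ} (x : BitString n) : ℤ × ℤ :=
  ((leadingOnes x : ℤ), (trailingZeros x : ℤ))

/-- `y` dominates `x` (maximisation). -/
def dominates {n : ℕ} (f : BitString n → ℤ × ℤ) (y x : BitString n) : Prop :=
  (f x).1 ≤ (f y).1 ∧ (f x).2 ≤ (f y).2 ∧ f x ≠ f y

/-- `y` weakly dominates `x` (maximisation). -/
def weaklyDominates {n : ℕ} (f : BitString n → ℤ × ℤ) (y x : BitString n) : Prop :=
  (f x).1 ≤ (f y).1 ∧ (f x).2 ≤ (f y).2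

/-- Pareto optimality. -/
def paretoOptimal {n : ℕ} (f : BitString n → ℤ × ℤ) (x : BitString n) : Prop :=
  ¬ ∃ y : BitString n, dominates f y x

/-- A population of mutually non-dominated points. -/
def mutuallyNonDominated {n : ℕ} (f : BitString n → ℤ × ℤ)
    (P : Finset (BitString n)) : Prop :=
  ∀ x ∈ P, ∀ y ∈ P, ¬ dominates f y x

/-- Flip bit `i` of `x`. -/
def flipBit {n : ℕ} (x : BitString n) (i : Fin n) : BitString n :=
  Function.update x i (!x i)

/-- `y` is a Hamming neighbour of `x`. -/
def hammingNeighbour {n : ℕ} (x y : BitString n) : Prop :=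
  ∃ i : Fin n, y = flipBit x i

/-- `x` is good relative to population `P`: it is Pareto optimal and has a Pareto-optimal
Hamming neighbour whose objective vector is not attained by any member of `P`. -/
def isGood {n : ℕ} (f : BitString n → ℤ × ℤ) (P : Finset (BitString n))
    (x : BitString n) : Prop :=
  paretoOptimal f x ∧
    ∃ y : BitString n, hammingNeighbour x y ∧ paretoOptimal f y ∧ ∀ z ∈ P, f z ≠ f y

/-- `x` is bad relative to population `P`. -/
def isBad {n : ℕ} (f : BitString n → ℤ × ℤ) (P : Finset (BitString n))
    (x : BitString n) : Prop :=
  paretoOptimal f x ∧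
    ¬ ∃ y : BitString n, hammingNeighbour x y ∧ paretoOptimal f y ∧ ∀ z ∈ P, f z ≠ f y

/-- `P` covers the whole Pareto front of `f`. -/
def coversFront {n : ℕ} (f : BitString n → ℤ × ℤ) (P : Finset (BitString n)) : Prop :=
  ∀ x : BitString n, paretoOptimal f x → ∃ z ∈ P, f z = f x

/-- The hypervolume contribution of `x` to `P` (for a population of mutually
non-dominated points, with reference point `r`). -/
def HVC {n : ℕ} (f : BitString n → ℤ × ℤ) (r : ℤ × ℤ) (x : BitString n)
    (P : Finset (BitString n)) : ℤ :=
  ((f x).1 - (((P.filter fun z => (f z).1 < (f x).1).image fun z => (f z).1).max.unbotD r.1)) *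
  ((f x).2 - (((P.filter fun z => (f z).2 < (f x).2).image fun z => (f z).2).max.unbotD r.2))

/-- Crowding distance of `x` in `P` with respect to a single objective `g`: infinite for the
boundary points, and otherwise the normalised difference between successor and predecessor. -/
def CDCobj {n : ℕ} (g : BitString n → ℤ) (x : BitString n)
    (P : Finset (BitString n)) : ℝ≥0∞ :=
  if (∀ z ∈ P, g x ≤ g z) ∨ (∀ z ∈ P, g z ≤ g x) then ⊤
  else
    (((((P.filter fun z => g x < g z).image g).min.untopD 0 -
        (((P.filter fun z => g z < g x).image g).max.unbotD 0)).toNat : ℝ≥0∞)) /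
      ((((P.image g).max.unbotD 0 - ((P.image g).min.untopD 0)).toNat : ℝ≥0∞))

/-- The crowding distance contribution of `x` to `P`. -/
def CDC {n : ℕ} (f : BitString n → ℤ × ℤ) (x : BitString n)
    (P : Finset (BitString n)) : ℝ≥0∞ :=
  CDCobj (fun z => (f z).1) x P + CDCobj (fun z => (f z).2) x P

/-- A diversity measure `c` is diversity-favouring on `S`. -/
def diversityFavouring {n : ℕ} {α : Type*} [Preorder α] (f : BitString n → ℤ × ℤ)
    (c : BitString n → Finset (BitString n) → α) (S : Set (BitString n)) : Prop :=
  ∀ P : Finset (BitString n), mutuallyNonDominated f P →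
    ∀ x ∈ P, ∀ y ∈ P, x ∈ S → y ∈ S → isBad f P x → isGood f P y → c x P < c y P

/-- The default bit string (used only to make selection kernels total). -/
def defaultBS (n : ℕ) : BitString n := fun _ => false

/-- Local mutation: flip a single uniformly random bit. -/
def localMutation {n : ℕ} (hn : 0 < n) (x : BitString n) : PMF (BitString n) :=
  haveI : Nonempty (Fin n) := ⟨⟨0, hn⟩⟩
  (PMF.uniformOfFintype (Fin n)).map (flipBit x)

/-- A Bernoulli coin with success probability `1/n` (for `n ≥ 1`). -/
def bitFlipCoin (n : ℕ) : PMF Bool :=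
  PMF.ofFintype (fun b => cond b (min ((n : ℝ≥0∞))⁻¹ 1) (1 - min ((n : ℝ≥0∞))⁻¹ 1))
    (by simp [Fintype.sum_bool, add_tsub_cancel_of_le (min_le_right ((n : ℝ≥0∞))⁻¹ 1)])

/-- Global (standard bit) mutation: flip each bit independently with probability `1/n`. -/
def globalMutationAux {n : ℕ} : List (Fin n) → BitString n → PMF (BitString n)
  | [], x => PMF.pure x
  | i :: is, x => (bitFlipCoin n).bind fun b =>
      globalMutationAux is (if b then flipBit x i else x)

def globalMutation {n : ℕ} (x : BitString n) : PMF (BitString n) :=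
  globalMutationAux (List.finRange n) x

/-- Survival selection: if `s'` is not dominated by any member of `P`, add `s'` to `P` and
remove all members weakly dominated by `s'`. -/
def updatePop {n : ℕ} (f : BitString n → ℤ × ℤ) (P : Finset (BitString n))
    (s' : BitString n) : Finset (BitString n) :=
  if ∃ z ∈ P, dominates f z s' then P
  else insert s' (P.filter fun z => ¬ weaklyDominates f s' z)

/-- One iteration of (G)SEMO with parent-selection kernel `select` and mutation `mutate`. -/
def step {n : ℕ} (f : BitString n → ℤ × ℤ)
    (select : Finset (BitString n) → PMF (BitString n))
    (mutate : BitString n → PMF (BitString n))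
    (P : Finset (BitString n)) : PMF (Finset (BitString n)) :=
  (select P).bind fun s => (mutate s).map fun s' => updatePop f P s'

/-- The L-dominant attribute `L(x) = LO(x) + TZ(x)`. -/
def Ldom {n : ℕ} (x : BitString n) : ℕ := leadingOnes x + trailingZeros x

/-- The subpopulation of points with maximum L-dominant attribute. -/
def maxLSub {n : ℕ} (P : Finset (BitString n)) : Finset (BitString n) :=
  P.filter fun x => ∀ z ∈ P, Ldom z ≤ Ldom x

/-- One iteration of the modified GSEMO: parent selection (and the diversity contribution)
is restricted to the subpopulation of points with maximum L-dominant attribute. -/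
def stepMod {n : ℕ} (f : BitString n → ℤ × ℤ)
    (select : Finset (BitString n) → PMF (BitString n))
    (mutate : BitString n → PMF (BitString n))
    (P : Finset (BitString n)) : PMF (Finset (BitString n)) :=
  (select (maxLSub P)).bind fun s => (mutate s).map fun s' => updatePop f P s'

/-- Initial population: a single uniformly random bit string. -/
def initDist (n : ℕ) : PMF (Finset (BitString n)) :=
  (PMF.uniformOfFintype (BitString n)).map fun x => {x}

/-- Distribution of the population after `t` iterations. -/
def stateDist {S : Type*} (init : PMF S) (st : S → PMF S) : ℕ → PMF S
  | 0 => init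
  | t + 1 => (stateDist init st t).bind st

/-- Expected number of iterations until an (absorbing) goal predicate is reached,
expressed as `∑ₜ Pr[goal not yet reached at time t]`. -/
def expectedRuntime {S : Type*} (init : PMF S) (st : S → PMF S) (goal : S → Prop) : ℝ≥0∞ :=
  ∑' t : ℕ, (stateDist init st t).toOuterMeasure {s | ¬ goal s}

/-- Uniform parent selection. -/
def uniformSelect {n : ℕ} (P : Finset (BitString n)) : PMF (BitString n) :=
  if h : P.Nonempty then PMF.uniformOfFinset P h else PMF.pure (defaultBS n)

/-- Highest Diversity Contribution (HDC) parent selection: select an individual with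
maximum diversity contribution, ties broken uniformly at random. -/
def HDCSelect {n : ℕ} {α : Type*} [LinearOrder α]
    (c : BitString n → Finset (BitString n) → α)
    (P : Finset (BitString n)) : PMF (BitString n) :=
  if h : P.Nonempty then
    PMF.uniformOfFinset (P.filter fun x => ∀ y ∈ P, c y P ≤ c x P)
      (by
        obtain ⟨b, hb, hmax⟩ := P.exists_max_image (fun x => c x P) h
        exact ⟨b, Finset.mem_filter.mpr ⟨hb, hmax⟩⟩)
  else PMF.pure (defaultBS n)

/-- Non-Minimum Uniform at Random (NMUAR) parent selection: select uniformly at random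
among all individuals whose diversity contribution is not minimal (from the whole
population if all contributions are equal). -/
def NMUARSelect {n : ℕ} {α : Type*} [LinearOrder α]
    (c : BitString n → Finset (BitString n) → α)
    (P : Finset (BitString n)) : PMF (BitString n) :=
  if h : P.Nonempty then
    if hQ : (P.filter fun x => ∃ y ∈ P, c y P < c x P).Nonempty then
      PMF.uniformOfFinset _ hQ
    else PMF.uniformOfFinset P h
  else PMF.pure (defaultBS n)

/-- Tournament selection with tournament size `μ = |P|`: draw `μ` individuals uniformly at
random with replacement from `P` and select one with the highest diversity contribution
among the drawn multiset (ties broken uniformly at random). -/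
def tournamentSelect {n : ℕ} {α : Type*} [LinearOrder α]
    (c : BitString n → Finset (BitString n) → α)
    (P : Finset (BitString n)) : PMF (BitString n) :=
  if h : P.Nonempty then
    haveI : Nonempty {x // x ∈ P} := h.to_subtype
    (PMF.uniformOfFintype (Fin P.card → {x // x ∈ P})).bind fun g =>
      PMF.uniformOfFinset
        ((Finset.univ.image fun i => ((g i : {x // x ∈ P}) : BitString n)).filter fun x =>
          ∀ y ∈ Finset.univ.image fun i => ((g i : {x // x ∈ P}) : BitString n), c y P ≤ c x P)
        (by
          have hne : (Finset.univ.image fun i => ((g i : {x // x ∈ P}) : BitString n)).Nonempty := by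
            refine ⟨(g ⟨0, Finset.card_pos.mpr h⟩ : {x // x ∈ P}), ?_⟩
            exact Finset.mem_image.mpr ⟨⟨0, Finset.card_pos.mpr h⟩, Finset.mem_univ _, rfl⟩
          obtain ⟨b, hb, hmax⟩ :=
            Finset.exists_max_image _ (fun x => c x P) hne
          exact ⟨b, Finset.mem_filter.mpr ⟨hb, hmax⟩⟩)
  else PMF.pure (defaultBS n)

/-- Exponential ranking scheme: probability of selecting the `i`-th ranked individual
(1-indexed) in a population of size `μ`. -/
def rExp (i μ : ℕ) : ℝ≥0∞ :=
  (2 : ℝ≥0∞)⁻¹ ^ i / ∑ j ∈ Finset.Icc 1 μ, (2 : ℝ≥0∞)⁻¹ ^ j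

/-- Power-law ranking scheme. -/
def rPow (i μ : ℕ) : ℝ≥0∞ :=
  ((i : ℝ≥0∞) ^ 2)⁻¹ / ∑ j ∈ Finset.Icc 1 μ, ((j : ℝ≥0∞) ^ 2)⁻¹

/-- Harmonic ranking scheme. -/
def rHarm (i μ : ℕ) : ℝ≥0∞ :=
  (i : ℝ≥0∞)⁻¹ / ∑ j ∈ Finset.Icc 1 μ, (j : ℝ≥0∞)⁻¹


/-- `select` implements a rank-based parent-selection scheme with rank probabilities
`r i μ` (1-indexed rank `i`, population size `μ`) with respect to the diversity
contribution `c`, for some non-increasing ordering of the population by `c`. -/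
def implementsRankScheme {n : ℕ} {α : Type*} [Preorder α]
    (c : BitString n → Finset (BitString n) → α) (r : ℕ → ℕ → ℝ≥0∞)
    (select : Finset (BitString n) → PMF (BitString n)) : Prop :=
  ∀ P : Finset (BitString n), P.Nonempty →
    ∃ l : List (BitString n), l.Nodup ∧ l.toFinset = P ∧
      l.Chain' (fun a b => c b P ≤ c a P) ∧
      (∀ i : Fin l.length, select P (l.get i) = r (i.val + 1) P.card) ∧
      (∀ x : BitString n, x ∉ P → select P x = 0)

/-- The Pareto-optimal point `1^i 0^(n-i)` of LOTZ. -/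
def opt (n i : ℕ) : BitString n := fun t => decide ((t : ℕ) < i)

/-- The whole Pareto set of LOTZ as a population. -/
def frontSet (n : ℕ) : Finset (BitString n) := (Finset.range (n + 1)).image (opt n)

/-- `P` has a gap at position `i`. -/
def hasGapAt {n : ℕ} (P : Finset (BitString n)) (i : ℕ) : Prop :=
  opt n i ∉ P ∧ (∃ j, j < i ∧ opt n j ∈ P) ∧ (∃ k, i < k ∧ k ≤ n ∧ opt n k ∈ P)

/-- `P` has a gap at some position `i` with `n/4 ≤ i ≤ 3n/4`. -/
def gapInRange (n : ℕ) (P : Finset (BitString n)) : Prop :=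
  ∃ i : ℕ, n ≤ 4 * i ∧ 4 * i ≤ 3 * n ∧ hasGapAt P i

/-- `P` contains both `0^n` and `1^n`. -/
def bothExtremes (n : ℕ) (P : Finset (BitString n)) : Prop :=
  allZeros n ∈ P ∧ allOnes n ∈ P

/-- The chain stopped (frozen) as soon as `cond` holds. -/
def stopWhen {S : Type*} (cond : S → Prop) (st : S → PMF S) (s : S) : PMF S :=
  if cond s then PMF.pure s else st s


lemma tsum_expect_bind {α β : Type*} (q : PMF α) (f : α → PMF β) (g : β → ℝ≥0∞) :
    ∑' b, (q.bind f) b * g b = ∑' a, q a * ∑' b, (f a) b * g b := by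
  simp_rw [PMF.bind_apply, ← ENNReal.tsum_mul_right]
  rw [ENNReal.tsum_comm]
  simp_rw [mul_assoc, ENNReal.tsum_mul_left]

lemma drift_bound {S : Type*} (init : PMF S) (st : S → PMF S) (goal : S → Prop)
    (I : S → Prop) (h : S → ℝ≥0∞) (H : ℝ≥0∞)
    (hinit : ∀ s ∈ init.support, I s)
    (hIpres : ∀ s, I s → ∀ s' ∈ (st s).support, I s')
    (hgoal0 : ∀ s, goal s → h s = 0)
    (habs : ∀ s, I s → goal s → ∀ s' ∈ (st s).support, goal s')
    (hbound : ∀ s, I s → h s ≤ H)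
    (hdrift : ∀ s, I s → ¬ goal s → (∑' s', (st s) s' * h s') + 1 ≤ h s) :
    expectedRuntime init st goal ≤ H := by
  set μ : ℕ → PMF S := stateDist init st with hμ
  have hInv : ∀ t, ∀ s ∈ (μ t).support, I s := by
    intro t
    induction t with
    | zero => exact hinit
    | succ t ih =>
      intro s hs
      have : (μ (t+1)).support = ⋃ a ∈ (μ t).support, (st a).support := by
        rw [hμ]; exact PMF.support_bind _ _
      rw [this] at hs
      simp only [Set.mem_iUnion] at hs
      obtain ⟨a, ha, hs⟩ := hs
      exact hIpres a (ih a ha) s hs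
  set b : ℕ → ℝ≥0∞ := fun t => ∑' s, μ t s * h s with hb
  set a : ℕ → ℝ≥0∞ := fun t => (μ t).toOuterMeasure {s | ¬ goal s} with ha
  have key : ∀ t, b (t+1) + a t ≤ b t := by
    intro t
    have h1 : b (t+1) = ∑' s, μ t s * ∑' s', (st s) s' * h s' := by
      rw [hb]; exact tsum_expect_bind (μ t) st h
    have h2 : a t = ∑' s, Set.indicator {s | ¬ goal s} (⇑(μ t)) s := by
      rw [ha]; exact PMF.toOuterMeasure_apply _ _
    rw [h1, h2, ← ENNReal.tsum_add]
    apply ENNReal.tsum_le_tsum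
    intro s
    by_cases hz : μ t s = 0
    · have hind : Set.indicator {s | ¬ goal s} (⇑(μ t)) s ≤ μ t s :=
        Set.indicator_apply_le (fun _ => le_rfl)
      simp only [hz, zero_mul, zero_add]
      calc Set.indicator {s | ¬ goal s} (⇑(μ t)) s ≤ μ t s := hind
        _ = 0 := hz
        _ ≤ _ := by simp
    · have hI : I s := hInv t s (by rwa [PMF.mem_support_iff])
      by_cases hg : goal s
      · have hF : (∑' s', (st s) s' * h s') = 0 := by
          apply ENNReal.tsum_eq_zero.mpr
          intro s'
          by_cases hs' : (st s) s' = 0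
          · simp [hs']
          · have : goal s' := habs s hI hg s' (by rwa [PMF.mem_support_iff])
            simp [hgoal0 s' this]
        rw [hF, Set.indicator_of_notMem (by simpa using hg)]
        simp
      · rw [Set.indicator_of_mem (by simpa using hg)]
        calc μ t s * (∑' s', (st s) s' * h s') + μ t s
            = μ t s * ((∑' s', (st s) s' * h s') + 1) := by ring
          _ ≤ μ t s * h s := mul_le_mul_right (hdrift s hI hg) _
  have psum : ∀ T, (∑ t ∈ Finset.range T, a t) + b T ≤ b 0 := by
    intro T
    induction T with
    | zero => simp
    | succ T ih =>
      rw [Finset.sum_range_succ]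
      calc (∑ t ∈ Finset.range T, a t) + a T + b (T+1)
          = (∑ t ∈ Finset.range T, a t) + (b (T+1) + a T) := by ring
        _ ≤ (∑ t ∈ Finset.range T, a t) + b T := add_le_add_right (key T) _
        _ ≤ b 0 := ih
  have hb0 : b 0 ≤ H := by
    rw [hb]
    calc ∑' s, μ 0 s * h s ≤ ∑' s, μ 0 s * H := by
          apply ENNReal.tsum_le_tsum
          intro s
          by_cases hz : μ 0 s = 0
          · simp [hz]
          · exact mul_le_mul_right (hbound s (hInv 0 s (by rwa [PMF.mem_support_iff]))) _
      _ = (∑' s, μ 0 s) * H := ENNReal.tsum_mul_right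
      _ = H := by rw [PMF.tsum_coe, one_mul]
  have : ∑' t, a t ≤ b 0 := by
    rw [ENNReal.tsum_eq_iSup_sum]
    apply iSup_le
    intro F
    calc ∑ t ∈ F, a t ≤ ∑ t ∈ Finset.range (F.sup id + 1), a t := by
          apply Finset.sum_le_sum_of_subset
          intro t ht
          simp only [Finset.mem_range]
          exact Nat.lt_succ_of_le (Finset.le_sup (f := id) ht)
      _ ≤ b 0 := le_trans (le_add_right le_rfl) (psum _)
  exact le_trans this hb0


lemma tsum_expect_map {α β : Type*} (p : PMF α) (k : α → β) (g : β → ℝ≥0∞) :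
    ∑' b, (p.map k) b * g b = ∑' a, p a * g (k a) := by
  rw [PMF.map, tsum_expect_bind]
  congr 1
  ext a
  congr 1
  rw [tsum_eq_single (k a)]
  · simp [PMF.pure_apply]
  · intro b hb; simp [PMF.pure_apply, hb]


lemma mem_downclosed_iff {n : ℕ} {F : Finset (Fin n)}
    (hd : ∀ i ∈ F, ∀ j, j ≤ i → j ∈ F) (i : Fin n) : i ∈ F ↔ (i : ℕ) < F.card := by
  constructor
  · intro hi
    have hsub : Finset.Iic i ⊆ F := fun j hj => hd i hi j (Finset.mem_Iic.mp hj)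
    have := Finset.card_le_card hsub
    rw [Fin.card_Iic] at this
    omega
  · intro hlt
    by_contra hni
    have hsub : F ⊆ Finset.Iio i := by
      intro j hj
      rw [Finset.mem_Iio]
      by_contra hle
      exact hni (hd j hj i (le_of_not_gt hle))
    have := Finset.card_le_card hsub
    rw [Fin.card_Iio] at this
    omega

lemma mem_upclosed_iff {n : ℕ} {F : Finset (Fin n)}
    (hd : ∀ i ∈ F, ∀ j, i ≤ j → j ∈ F) (i : Fin n) : i ∈ F ↔ n ≤ (i : ℕ) + F.card := by
  constructor
  · intro hi
    have hsub : Finset.Ici i ⊆ F := fun j hj => hd i hi j (Finset.mem_Ici.mp hj)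
    have := Finset.card_le_card hsub
    rw [Fin.card_Ici] at this
    omega
  · intro hlt
    by_contra hni
    have hsub : F ⊆ Finset.Ioi i := by
      intro j hj
      rw [Finset.mem_Ioi]
      by_contra hle
      exact hni (hd j hj i (le_of_not_gt hle))
    have := Finset.card_le_card hsub
    rw [Fin.card_Ioi] at this
    have hi := i.isLt
    omega

lemma lo_downclosed {n : ℕ} (x : BitString n) :
    ∀ i ∈ (Finset.univ.filter fun i : Fin n => ∀ j : Fin n, j ≤ i → x j = true),
      ∀ j, j ≤ i → j ∈ (Finset.univ.filter fun i : Fin n => ∀ j : Fin n, j ≤ i → x j = true) := by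
  intro i hi j hji
  rw [Finset.mem_filter] at hi ⊢
  exact ⟨Finset.mem_univ _, fun k hk => hi.2 k (le_trans hk hji)⟩

lemma tz_upclosed {n : ℕ} (x : BitString n) :
    ∀ i ∈ (Finset.univ.filter fun i : Fin n => ∀ j : Fin n, i ≤ j → x j = false),
      ∀ j, i ≤ j → j ∈ (Finset.univ.filter fun i : Fin n => ∀ j : Fin n, i ≤ j → x j = false) := by
  intro i hi j hji
  rw [Finset.mem_filter] at hi ⊢
  exact ⟨Finset.mem_univ _, fun k hk => hi.2 k (le_trans hji hk)⟩

lemma lo_mem_iff {n : ℕ} (x : BitString n) (i : Fin n) :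
    (∀ j : Fin n, j ≤ i → x j = true) ↔ (i : ℕ) < leadingOnes x := by
  have := mem_downclosed_iff (lo_downclosed x) i
  simpa [leadingOnes, Finset.mem_filter] using this

lemma tz_mem_iff {n : ℕ} (x : BitString n) (i : Fin n) :
    (∀ j : Fin n, i ≤ j → x j = false) ↔ n ≤ (i : ℕ) + trailingZeros x := by
  have := mem_upclosed_iff (tz_upclosed x) i
  simpa [trailingZeros, Finset.mem_filter] using this

lemma lo_le {n : ℕ} (x : BitString n) : leadingOnes x ≤ n := by
  have := Finset.card_filter_le Finset.univ (fun i : Fin n => ∀ j : Fin n, j ≤ i → x j = true)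
  simpa [leadingOnes] using this

lemma tz_le {n : ℕ} (x : BitString n) : trailingZeros x ≤ n := by
  have := Finset.card_filter_le Finset.univ (fun i : Fin n => ∀ j : Fin n, i ≤ j → x j = false)
  simpa [trailingZeros] using this

lemma lo_spec1 {n : ℕ} (x : BitString n) (j : Fin n) (h : (j : ℕ) < leadingOnes x) :
    x j = true := ((lo_mem_iff x j).mpr h) j le_rfl

lemma tz_spec1 {n : ℕ} (x : BitString n) (j : Fin n) (h : n ≤ (j : ℕ) + trailingZeros x) :
    x j = false := ((tz_mem_iff x j).mpr h) j le_rfl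

lemma lo_spec2 {n : ℕ} (x : BitString n) (h : leadingOnes x < n) :
    x ⟨leadingOnes x, h⟩ = false := by
  by_contra hc
  simp only [Bool.not_eq_false] at hc
  have hmem : ∀ j : Fin n, j ≤ (⟨leadingOnes x, h⟩ : Fin n) → x j = true := by
    intro j hj
    rcases lt_or_eq_of_le hj with hlt | heq
    · exact lo_spec1 x j hlt
    · rw [heq]; exact hc
  have := (lo_mem_iff x _).mp hmem
  simp at this

lemma tz_spec2 {n : ℕ} (x : BitString n) (h : trailingZeros x < n) :
    x ⟨n - 1 - trailingZeros x, by omega⟩ = true := by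
  by_contra hc
  simp only [Bool.not_eq_true] at hc
  have hmem : ∀ j : Fin n, (⟨n - 1 - trailingZeros x, by omega⟩ : Fin n) ≤ j → x j = false := by
    intro j hj
    rcases lt_or_eq_of_le hj with hlt | heq
    · apply tz_spec1
      have : (n - 1 - trailingZeros x : ℕ) < (j : ℕ) := hlt
      omega
    · rw [← heq]; exact hc
  have := (tz_mem_iff x _).mp hmem
  simp only at this
  omega

lemma lo_ge {n : ℕ} (x : BitString n) (m : ℕ) (hm : m ≤ n)
    (h : ∀ j : Fin n, (j : ℕ) < m → x j = true) : m ≤ leadingOnes x := by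
  rcases Nat.eq_zero_or_pos m with rfl | hpos
  · omega
  have hlt : m - 1 < n := by omega
  have hmem : ∀ j : Fin n, j ≤ (⟨m - 1, hlt⟩ : Fin n) → x j = true := by
    intro j hj
    exact h j (by have : (j : ℕ) ≤ m - 1 := hj; omega)
  have := (lo_mem_iff x _).mp hmem
  simp only at this
  omega

lemma tz_ge {n : ℕ} (x : BitString n) (m : ℕ) (hm : m ≤ n)
    (h : ∀ j : Fin n, n ≤ (j : ℕ) + m → x j = false) : m ≤ trailingZeros x := by
  rcases Nat.eq_zero_or_pos m with rfl | hpos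
  · omega
  have hlt : n - m < n := by omega
  have hmem : ∀ j : Fin n, (⟨n - m, hlt⟩ : Fin n) ≤ j → x j = false := by
    intro j hj
    exact h j (by have : (n - m : ℕ) ≤ (j : ℕ) := hj; omega)
  have := (tz_mem_iff x _).mp hmem
  simp only at this
  omega

lemma ldom_le {n : ℕ} (x : BitString n) : Ldom x ≤ n := by
  by_contra hc
  push_neg at hc
  have hc : n < leadingOnes x + trailingZeros x := hc
  have ha := lo_le x
  have hb := tz_le x
  set a := leadingOnes x
  set b := trailingZeros x
  have hab : n < a + b := hc
  have hb1 : 1 ≤ b := by omega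
  have hjlt : n - b < n := by omega
  have h1 : x ⟨n - b, hjlt⟩ = true := lo_spec1 x _ (by simp; omega)
  have h2 : x ⟨n - b, hjlt⟩ = false := tz_spec1 x _ (by simp; omega)
  rw [h1] at h2; simp at h2

lemma ldom_ne_pred {n : ℕ} (hn : 0 < n) (x : BitString n) : Ldom x ≠ n - 1 := by
  intro hc
  have hc : leadingOnes x + trailingZeros x = n - 1 := hc
  have ha := lo_le x
  have hb := tz_le x
  set a := leadingOnes x with hA
  set b := trailingZeros x with hB
  have h1 : a < n := by omega
  have h2 : b < n := by omega
  have hx1 : x ⟨a, h1⟩ = false := lo_spec2 x h1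
  have hx2 : x ⟨n - 1 - b, by omega⟩ = true := tz_spec2 x h2
  have heq : (⟨n - 1 - b, by omega⟩ : Fin n) = ⟨a, h1⟩ := by
    apply Fin.ext; simp; omega
  rw [heq, hx1] at hx2
  simp at hx2

lemma pareto_of_ldom_eq {n : ℕ} (x : BitString n) (hx : Ldom x = n) :
    paretoOptimal LOTZ x := by
  rintro ⟨y, h1, h2, hne⟩
  have hy := ldom_le y
  have hx' : leadingOnes x + trailingZeros x = n := hx
  have hy' : leadingOnes y + trailingZeros y ≤ n := hy
  simp only [LOTZ] at h1 h2 hne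
  have h1' : leadingOnes x ≤ leadingOnes y := by exact_mod_cast h1
  have h2' : trailingZeros x ≤ trailingZeros y := by exact_mod_cast h2
  have e1 : leadingOnes x = leadingOnes y := by omega
  have e2 : trailingZeros x = trailingZeros y := by omega
  exact hne (by rw [Prod.ext_iff]; constructor <;> simp [LOTZ, e1, e2])

lemma not_pareto_ldom_le {n : ℕ} (hn : 0 < n) (x : BitString n)
    (hx : ¬ paretoOptimal LOTZ x) : Ldom x + 2 ≤ n := by
  have h1 := ldom_le x
  have h2 := ldom_ne_pred hn x
  have h3 : Ldom x ≠ n := fun hc => hx (pareto_of_ldom_eq x hc)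
  omega

lemma flipBit_apply {n : ℕ} (x : BitString n) (i j : Fin n) :
    flipBit x i j = if j = i then !x i else x j := by
  simp [flipBit, Function.update_apply]

lemma ldom_flip1 {n : ℕ} (x : BitString n) (hab : Ldom x + 2 ≤ n) :
    Ldom x + 1 ≤ Ldom (flipBit x ⟨leadingOnes x, by have h : leadingOnes x + trailingZeros x + 2 ≤ n := hab; omega⟩) := by
  have ha := lo_le x
  have hb := tz_le x
  have hab' : leadingOnes x + trailingZeros x + 2 ≤ n := hab
  set a := leadingOnes x with hA
  set b := trailingZeros x with hB
  have h1 : a < n := by omega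
  set y := flipBit x ⟨a, h1⟩ with hy
  have hLO : a + 1 ≤ leadingOnes y := by
    apply lo_ge y (a+1) (by omega)
    intro j hj
    rw [hy, flipBit_apply]
    by_cases hji : j = ⟨a, h1⟩
    · rw [if_pos hji, lo_spec2 x h1]; rfl
    · rw [if_neg hji]
      apply lo_spec1
      have : (j : ℕ) ≠ a := fun hc => hji (Fin.ext hc)
      omega
  have hTZ : b ≤ trailingZeros y := by
    apply tz_ge y b (by omega)
    intro j hj
    rw [hy, flipBit_apply]
    have hja : (j : ℕ) ≠ a := by omega
    rw [if_neg (fun hc => hja (by rw [hc]))]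
    exact tz_spec1 x j hj
  have hLy : Ldom y = leadingOnes y + trailingZeros y := rfl
  have hLx : Ldom x = a + b := rfl
  omega

lemma ldom_flip2 {n : ℕ} (x : BitString n) (hab : Ldom x + 2 ≤ n) :
    Ldom x + 1 ≤ Ldom (flipBit x ⟨n - 1 - trailingZeros x, by have h : leadingOnes x + trailingZeros x + 2 ≤ n := hab; omega⟩) := by
  have ha := lo_le x
  have hb := tz_le x
  have hab' : leadingOnes x + trailingZeros x + 2 ≤ n := hab
  set a := leadingOnes x with hA
  set b := trailingZeros x with hB
  have h2 : b < n := by omega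
  set y := flipBit x ⟨n - 1 - b, by omega⟩ with hy
  have hLO : a ≤ leadingOnes y := by
    apply lo_ge y a (by omega)
    intro j hj
    rw [hy, flipBit_apply]
    have hja : (j : ℕ) ≠ n - 1 - b := by omega
    rw [if_neg (fun hc => hja (by rw [hc]))]
    exact lo_spec1 x j hj
  have hTZ : b + 1 ≤ trailingZeros y := by
    apply tz_ge y (b+1) (by omega)
    intro j hj
    rw [hy, flipBit_apply]
    by_cases hji : j = ⟨n - 1 - b, by omega⟩
    · rw [if_pos hji, tz_spec2 x h2]; rfl
    · rw [if_neg hji]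
      apply tz_spec1
      have : (j : ℕ) ≠ n - 1 - b := fun hc => hji (Fin.ext hc)
      omega
  have hLy : Ldom y = leadingOnes y + trailingZeros y := rfl
  have hLx : Ldom x = a + b := rfl
  omega

lemma flips_ne {n : ℕ} (x : BitString n) (hab : Ldom x + 2 ≤ n) :
    flipBit x ⟨leadingOnes x, by have h : leadingOnes x + trailingZeros x + 2 ≤ n := hab; omega⟩ ≠
    flipBit x ⟨n - 1 - trailingZeros x, by have h : leadingOnes x + trailingZeros x + 2 ≤ n := hab; omega⟩ := by
  have ha := lo_le x
  have hb := tz_le x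
  have hab' : leadingOnes x + trailingZeros x + 2 ≤ n := hab
  set a := leadingOnes x with hA
  set b := trailingZeros x with hB
  have h1 : a < n := by omega
  intro hc
  have := congrFun hc ⟨a, h1⟩
  rw [flipBit_apply, flipBit_apply, if_pos rfl] at this
  have hne : (⟨a, h1⟩ : Fin n) ≠ ⟨n - 1 - b, by omega⟩ := by
    intro hc2
    rw [Fin.mk.injEq] at hc2
    omega
  rw [if_neg hne] at this
  rw [lo_spec2 x h1] at this
  simp at this



lemma ldom_le_of_weak {n : ℕ} {y z : BitString n} (h : weaklyDominates LOTZ y z) :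
    Ldom z ≤ Ldom y := by
  obtain ⟨h1, h2⟩ := h
  simp only [LOTZ] at h1 h2
  have h1' : leadingOnes z ≤ leadingOnes y := by exact_mod_cast h1
  have h2' : trailingZeros z ≤ trailingZeros y := by exact_mod_cast h2
  exact Nat.add_le_add h1' h2'

lemma ldom_le_of_dom {n : ℕ} {y z : BitString n} (h : dominates LOTZ y z) :
    Ldom z ≤ Ldom y := ldom_le_of_weak ⟨h.1, h.2.1⟩

lemma updatePop_nonempty {n : ℕ} (P : Finset (BitString n)) (hP : P.Nonempty)
    (s' : BitString n) : (updatePop LOTZ P s').Nonempty := by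
  unfold updatePop
  split
  · exact hP
  · exact Finset.insert_nonempty _ _

lemma updatePop_sup_mono {n : ℕ} (P : Finset (BitString n)) (s' : BitString n) :
    P.sup Ldom ≤ (updatePop LOTZ P s').sup Ldom := by
  unfold updatePop
  split
  · exact le_rfl
  · apply Finset.sup_le
    intro z hz
    by_cases hw : weaklyDominates LOTZ s' z
    · exact le_trans (ldom_le_of_weak hw) (Finset.le_sup (Finset.mem_insert_self _ _))
    · exact Finset.le_sup (Finset.mem_insert_of_mem (Finset.mem_filter.mpr ⟨hz, hw⟩))

lemma updatePop_mem_of_not_dom {n : ℕ} (P : Finset (BitString n)) (s' : BitString n)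
    (h : ∀ z ∈ P, ¬ dominates LOTZ z s') : s' ∈ updatePop LOTZ P s' := by
  unfold updatePop
  rw [if_neg (by push_neg; exact fun z hz => h z hz)]
  exact Finset.mem_insert_self _ _

lemma pareto_congr {n : ℕ} {x y : BitString n} (h : LOTZ y = LOTZ x)
    (hx : paretoOptimal LOTZ x) : paretoOptimal LOTZ y := by
  rintro ⟨z, h1, h2, hne⟩
  exact hx ⟨z, by rw [← h]; exact h1, by rw [← h]; exact h2, by rw [← h]; exact hne⟩

lemma updatePop_goal_pres {n : ℕ} (P : Finset (BitString n)) (s' : BitString n)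
    (x : BitString n) (hx : x ∈ P) (hp : paretoOptimal LOTZ x) :
    ∃ y ∈ updatePop LOTZ P s', paretoOptimal LOTZ y := by
  unfold updatePop
  split
  · exact ⟨x, hx, hp⟩
  · by_cases hw : weaklyDominates LOTZ s' x
    · have heq : LOTZ s' = LOTZ x := by
        by_contra hne
        exact hp ⟨s', hw.1, hw.2, fun hc => hne hc.symm⟩
      exact ⟨s', Finset.mem_insert_self _ _, pareto_congr heq hp⟩
    · exact ⟨x, Finset.mem_insert_of_mem (Finset.mem_filter.mpr ⟨hx, hw⟩), hp⟩

lemma maxLSub_nonempty {n : ℕ} (P : Finset (BitString n)) (hP : P.Nonempty) :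
    (maxLSub P).Nonempty := by
  obtain ⟨b, hb, hmax⟩ := P.exists_max_image Ldom hP
  exact ⟨b, Finset.mem_filter.mpr ⟨hb, hmax⟩⟩

lemma maxLSub_ldom {n : ℕ} (P : Finset (BitString n)) (s : BitString n)
    (hs : s ∈ maxLSub P) : s ∈ P ∧ Ldom s = P.sup Ldom := by
  rw [maxLSub, Finset.mem_filter] at hs
  exact ⟨hs.1, le_antisymm (Finset.le_sup hs.1) (Finset.sup_le hs.2)⟩



lemma globalMutationAux_apply {n : ℕ} (l : List (Fin n)) (hl : l.Nodup)
    (x y : BitString n) :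
    globalMutationAux l x y =
      if ∀ j : Fin n, j ∉ l → y j = x j then
        (l.map fun j => if y j = x j then 1 - min ((n : ℝ≥0∞))⁻¹ 1 else min ((n : ℝ≥0∞))⁻¹ 1).prod
      else 0 := by
  set p : ℝ≥0∞ := min ((n : ℝ≥0∞))⁻¹ 1 with hp
  induction l generalizing x with
  | nil =>
    simp only [globalMutationAux, PMF.pure_apply, List.not_mem_nil, List.map_nil, List.prod_nil]
    by_cases h : y = x
    · rw [if_pos h, if_pos (fun j _ => by rw [h])]
    · rw [if_neg h, if_neg (fun hc => h (funext fun j => hc j (by simp)))]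
  | cons i is ih =>
    obtain ⟨hi, his⟩ := List.nodup_cons.mp hl
    have hbind : globalMutationAux (i :: is) x y =
        p * globalMutationAux is (flipBit x i) y + (1 - p) * globalMutationAux is x y := by
      show ((bitFlipCoin n).bind fun b => globalMutationAux is (if b then flipBit x i else x)) y = _
      rw [PMF.bind_apply, tsum_bool]
      simp only [bitFlipCoin, PMF.ofFintype_apply, cond_true, cond_false, if_true,
        Bool.false_eq_true, if_false]
      rw [hp]
      ring
    rw [hbind, ih his (flipBit x i), ih his x]
    have hprodflip : (is.map fun j => if y j = flipBit x i j then 1 - p else p).prod =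
        (is.map fun j => if y j = x j then 1 - p else p).prod := by
      congr 1
      apply List.map_congr_left
      intro j hj
      have : flipBit x i j = x j := by
        rw [flipBit_apply, if_neg (fun hc => hi (by rw [← hc]; exact hj))]
      rw [this]
    rw [hprodflip]
    by_cases hyi : y i = x i
    · have hcond1 : (∀ j : Fin n, j ∉ is → y j = flipBit x i j) ↔ False := by
        simp only [iff_false]
        intro hc
        have := hc i hi
        rw [flipBit_apply, if_pos rfl] at this
        rw [hyi] at this
        exact (Bool.eq_not_self _).mp this
      have hcond2 : (∀ j : Fin n, j ∉ is → y j = x j) ↔ (∀ j : Fin n, j ∉ i :: is → y j = x j) := by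
        constructor
        · intro h j hj
          exact h j (fun hc => hj (List.mem_cons_of_mem _ hc))
        · intro h j hj
          by_cases hji : j = i
          · rw [hji]; exact hyi
          · exact h j (by simp [hji, hj])
      rw [if_congr hcond1 rfl rfl, if_neg id, if_congr hcond2 rfl rfl, mul_zero, zero_add]
      by_cases hc : ∀ j : Fin n, j ∉ i :: is → y j = x j
      · rw [if_pos hc, if_pos hc, List.map_cons, List.prod_cons, if_pos hyi]
      · rw [if_neg hc, if_neg hc, mul_zero]
    · have hyi' : y i = !x i := by
        cases hxv : x i <;> cases hyv : y i <;> simp_all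
      have hcond1 : (∀ j : Fin n, j ∉ is → y j = flipBit x i j) ↔
          (∀ j : Fin n, j ∉ i :: is → y j = x j) := by
        constructor
        · intro h j hj
          have hji : j ≠ i := fun hc => hj (hc ▸ List.mem_cons_self)
          have := h j (fun hc => hj (List.mem_cons_of_mem _ hc))
          rwa [flipBit_apply, if_neg hji] at this
        · intro h j hj
          rw [flipBit_apply]
          by_cases hji : j = i
          · rw [if_pos hji, hji]; exact hyi'
          · rw [if_neg hji]; exact h j (by simp [hji, hj])
      have hcond2 : (∀ j : Fin n, j ∉ is → y j = x j) ↔ False := by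
        simp only [iff_false]
        intro hc
        exact hyi (hc i hi)
      rw [if_congr hcond1 rfl rfl, if_congr hcond2 rfl rfl, if_neg id, mul_zero, add_zero]
      by_cases hc : ∀ j : Fin n, j ∉ i :: is → y j = x j
      · rw [if_pos hc, if_pos hc, List.map_cons, List.prod_cons, if_neg (fun hcc => hyi hcc)]
      · rw [if_neg hc, if_neg hc, mul_zero]

lemma globalMutation_apply_flip {n : ℕ} (hn : 0 < n) (x : BitString n) (i : Fin n) :
    globalMutation x (flipBit x i) =
      ((n : ℝ≥0∞))⁻¹ * (1 - ((n : ℝ≥0∞))⁻¹) ^ (n - 1) := by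
  have hpmin : min ((n : ℝ≥0∞))⁻¹ 1 = ((n : ℝ≥0∞))⁻¹ := by
    apply min_eq_left
    apply ENNReal.inv_le_one.mpr
    exact_mod_cast Nat.one_le_cast.mpr hn
  set p : ℝ≥0∞ := ((n : ℝ≥0∞))⁻¹ with hp
  rw [globalMutation, globalMutationAux_apply _ (List.nodup_finRange n),
    if_pos (fun j hj => absurd (List.mem_finRange j) hj)]
  rw [hpmin]
  have hfun : ∀ j : Fin n, (if flipBit x i j = x j then 1 - p else p) =
      (if j = i then p else 1 - p) := by
    intro j
    rw [flipBit_apply]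
    by_cases hji : j = i
    · subst hji
      rw [if_pos rfl, if_pos rfl, if_neg (by simp)]
    · rw [if_neg hji, if_neg hji, if_pos rfl]
  have : ((List.finRange n).map fun j => if flipBit x i j = x j then 1 - p else p).prod =
      ((List.finRange n).map fun j => if j = i then p else 1 - p).prod := by
    congr 1
    exact List.map_congr_left (fun j _ => hfun j)
  rw [this, ← List.prod_toFinset _ (List.nodup_finRange n), List.toFinset_finRange]
  rw [← Finset.mul_prod_erase Finset.univ _ (Finset.mem_univ i), if_pos rfl]
  congr 1
  rw [Finset.prod_congr rfl (fun j hj => if_neg (Finset.mem_erase.mp hj).1), Finset.prod_const,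
    Finset.card_erase_of_mem (Finset.mem_univ i), Finset.card_univ, Fintype.card_fin]



lemma real_key (n : ℕ) (hn : 2 ≤ n) : 1 ≤ Real.exp 1 * (1 - (n : ℝ)⁻¹) ^ (n - 1) := by
  have hn' : (2 : ℝ) ≤ (n : ℝ) := by exact_mod_cast hn
  set m : ℕ := n - 1 with hmdef
  have hm : (m : ℝ) = (n : ℝ) - 1 := by
    rw [hmdef, Nat.cast_sub (by omega)]; norm_num
  have hmpos : (0 : ℝ) < (m : ℝ) := by rw [hm]; linarith
  have h1 : 1 + (m : ℝ)⁻¹ ≤ Real.exp ((m : ℝ)⁻¹) := by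
    have := Real.add_one_le_exp ((m : ℝ)⁻¹)
    linarith
  have hkey : 1 ≤ (1 - (n : ℝ)⁻¹) * Real.exp ((m : ℝ)⁻¹) := by
    have he : (1 - (n : ℝ)⁻¹) * (1 + (m : ℝ)⁻¹) = 1 := by
      have hne : (n : ℝ) - 1 ≠ 0 := by linarith
      have hne2 : (n : ℝ) ≠ 0 := by linarith
      rw [hm]
      field_simp
      ring
    have hpos : (0 : ℝ) < 1 - (n : ℝ)⁻¹ := by
      have : (n : ℝ)⁻¹ ≤ 2⁻¹ := by
        apply inv_anti₀ <;> linarith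
      linarith [this]
    calc (1 : ℝ) = (1 - (n : ℝ)⁻¹) * (1 + (m : ℝ)⁻¹) := he.symm
      _ ≤ (1 - (n : ℝ)⁻¹) * Real.exp ((m : ℝ)⁻¹) := by
          apply mul_le_mul_of_nonneg_left h1 hpos.le
  have h2 : Real.exp (-(m : ℝ)⁻¹) ≤ 1 - (n : ℝ)⁻¹ := by
    rw [Real.exp_neg]
    have hepos := Real.exp_pos ((m : ℝ)⁻¹)
    rw [inv_le_iff_one_le_mul₀ hepos]
    linarith [hkey]
  have h3 : Real.exp (-(m : ℝ)⁻¹) ^ m ≤ (1 - (n : ℝ)⁻¹) ^ m :=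
    pow_le_pow_left₀ (Real.exp_pos _).le h2 m
  have h4 : Real.exp (-(m : ℝ)⁻¹) ^ m = Real.exp (-1) := by
    rw [← Real.exp_nat_mul]
    congr 1
    field_simp
  rw [h4] at h3
  calc (1 : ℝ) = Real.exp 1 * Real.exp (-1) := by
        rw [← Real.exp_add]; norm_num
    _ ≤ Real.exp 1 * (1 - (n : ℝ)⁻¹) ^ m := by
        apply mul_le_mul_of_nonneg_left h3 (Real.exp_pos _).le

lemma enn_key (n : ℕ) (hn : 2 ≤ n) :
    1 ≤ (((n : ℝ≥0∞))⁻¹ * (1 - ((n : ℝ≥0∞))⁻¹) ^ (n - 1) +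
         ((n : ℝ≥0∞))⁻¹ * (1 - ((n : ℝ≥0∞))⁻¹) ^ (n - 1)) *
        ENNReal.ofReal (Real.exp 1 * (n : ℝ) / 2) := by
  have h0 : (0 : ℝ) < (n : ℝ) := by
    have : (2 : ℝ) ≤ (n : ℝ) := by exact_mod_cast hn
    linarith
  have hinv : ENNReal.ofReal ((n : ℝ)⁻¹) = ((n : ℝ≥0∞))⁻¹ := by
    rw [ENNReal.ofReal_inv_of_pos h0, ENNReal.ofReal_natCast]
  have hz : (0 : ℝ) ≤ 1 - (n : ℝ)⁻¹ := by
    have h1 : (n : ℝ)⁻¹ ≤ 1 := by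
      rw [inv_le_one_iff₀]; right; linarith [show (2:ℝ) ≤ (n:ℝ) from by exact_mod_cast hn]
    linarith
  have hsub : (1 : ℝ≥0∞) - ((n : ℝ≥0∞))⁻¹ = ENNReal.ofReal (1 - (n : ℝ)⁻¹) := by
    rw [ENNReal.ofReal_sub _ (inv_nonneg.mpr h0.le), ENNReal.ofReal_one, hinv]
  have hinvnn : (0 : ℝ) ≤ (n : ℝ)⁻¹ := inv_nonneg.mpr h0.le
  have hterm : (0 : ℝ) ≤ (n : ℝ)⁻¹ * (1 - (n : ℝ)⁻¹) ^ (n - 1) :=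
    mul_nonneg hinvnn (pow_nonneg hz _)
  have main : (1 : ℝ) ≤ ((n : ℝ)⁻¹ * (1 - (n : ℝ)⁻¹) ^ (n - 1) +
      (n : ℝ)⁻¹ * (1 - (n : ℝ)⁻¹) ^ (n - 1)) * (Real.exp 1 * (n : ℝ) / 2) := by
    have heq : ((n : ℝ)⁻¹ * (1 - (n : ℝ)⁻¹) ^ (n - 1) +
        (n : ℝ)⁻¹ * (1 - (n : ℝ)⁻¹) ^ (n - 1)) * (Real.exp 1 * (n : ℝ) / 2) =
        Real.exp 1 * (1 - (n : ℝ)⁻¹) ^ (n - 1) := by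
      field_simp
      ring
    rw [heq]
    exact real_key n hn
  calc (1 : ℝ≥0∞) = ENNReal.ofReal 1 := by simp
    _ ≤ ENNReal.ofReal (((n : ℝ)⁻¹ * (1 - (n : ℝ)⁻¹) ^ (n - 1) +
        (n : ℝ)⁻¹ * (1 - (n : ℝ)⁻¹) ^ (n - 1)) * (Real.exp 1 * (n : ℝ) / 2)) :=
        ENNReal.ofReal_le_ofReal main
    _ = _ := by
        rw [ENNReal.ofReal_mul (by linarith [hterm]), ENNReal.ofReal_add hterm hterm,
          ENNReal.ofReal_mul hinvnn, ENNReal.ofReal_pow hz, hinv, ← hsub]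


/-- The modified GSEMO (parent selection restricted to the points
maximising `L(x) = LO(x) + TZ(x)`) obtains a first Pareto-optimal point on LOTZ in
expected time at most `∑_{L=0}^{n−2} en/2 ≤ e·n²/2 = O(n²)`, regardless of the
diversity-based parent-selection mechanism used within the restricted subpopulation. -/
theorem modified_gsemo_lotz_reach_front (n : ℕ) (hn : 0 < n)
    (select : Finset (BitString n) → PMF (BitString n))
    (hsupp : ∀ P : Finset (BitString n), P.Nonempty →
      ∀ x ∈ (select P).support, x ∈ P) :
    expectedRuntime (initDist n) (stepMod LOTZ select globalMutation)
        (fun P => ∃ x ∈ P, paretoOptimal LOTZ x) ≤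
      ENNReal.ofReal (Real.exp 1 * (n : ℝ) ^ 2 / 2) := by
  classical
  set c : ℝ≥0∞ := ENNReal.ofReal (Real.exp 1 * (n : ℝ) / 2) with hc
  set st := stepMod LOTZ select globalMutation with hst
  set h : Finset (BitString n) → ℝ≥0∞ := fun P =>
    if ∃ x ∈ P, paretoOptimal LOTZ x then 0
    else ((n - P.sup Ldom : ℕ) : ℝ≥0∞) * c with hh
  have hstep : ∀ P : Finset (BitString n), ∀ P' ∈ (st P).support,
      ∃ s', P' = updatePop LOTZ P s' := by
    intro P P' hP'
    rw [hst, stepMod, PMF.support_bind] at hP'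
    simp only [Set.mem_iUnion] at hP'
    obtain ⟨s, hs, hP'⟩ := hP'
    rw [PMF.support_map] at hP'
    obtain ⟨s', _, hs'⟩ := hP'
    exact ⟨s', hs'.symm⟩
  apply drift_bound _ _ _ (fun P => P.Nonempty) h _
  · intro P hP
    rw [initDist, PMF.support_map] at hP
    obtain ⟨x, _, hx⟩ := hP
    rw [← hx]
    exact Finset.singleton_nonempty x
  · intro P hP P' hP'
    obtain ⟨s', rfl⟩ := hstep P P' hP'
    exact updatePop_nonempty P hP s'
  · intro P hg
    rw [hh]
    exact if_pos hg
  · intro P hP hg P' hP'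
    obtain ⟨s', rfl⟩ := hstep P P' hP'
    obtain ⟨x, hx, hpx⟩ := hg
    exact updatePop_goal_pres P s' x hx hpx
  · intro P hP
    rw [hh]
    dsimp only
    split
    · exact (by simp)
    · calc ((n - P.sup Ldom : ℕ) : ℝ≥0∞) * c ≤ (n : ℝ≥0∞) * c := by
            apply mul_le_mul_left
            exact_mod_cast Nat.sub_le n _
        _ = ENNReal.ofReal (Real.exp 1 * (n : ℝ) ^ 2 / 2) := by
            rw [hc, ← ENNReal.ofReal_natCast n, ← ENNReal.ofReal_mul (Nat.cast_nonneg n)]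
            congr 1
            ring
  · intro P hP hgP
    set L := P.sup Ldom with hL
    obtain ⟨s₀, hs₀P, hs₀L⟩ := Finset.exists_mem_eq_sup P hP Ldom
    have hnotp : ¬ paretoOptimal LOTZ s₀ := fun hc => hgP ⟨s₀, hs₀P, hc⟩
    have hs₀ := not_pareto_ldom_le hn s₀ hnotp
    have hLn : L + 2 ≤ n := by omega
    have hhP : h P = ((n - L : ℕ) : ℝ≥0∞) * c := by
      rw [hh]; exact if_neg hgP
    have hE : (∑' P', (st P) P' * h P') =
        ∑' s, (select (maxLSub P)) s *
          ∑' s', globalMutation s s' * h (updatePop LOTZ P s') := by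
      rw [hst, stepMod, tsum_expect_bind]
      apply tsum_congr
      intro s
      congr 1
      exact tsum_expect_map _ _ _
    rw [hE, hhP]
    have hparent : ∀ s ∈ (select (maxLSub P)).support,
        (∑' s', globalMutation s s' * h (updatePop LOTZ P s')) + 1 ≤
          ((n - L : ℕ) : ℝ≥0∞) * c := by
      intro s hs
      have hsmem := hsupp (maxLSub P) (maxLSub_nonempty P hP) s hs
      obtain ⟨hsP, hsL⟩ := maxLSub_ldom P s hsmem
      have hnps : ¬ paretoOptimal LOTZ s := fun hc => hgP ⟨s, hsP, hc⟩
      have hab : Ldom s + 2 ≤ n := not_pareto_ldom_le hn s hnps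
      set y₁ := flipBit s ⟨leadingOnes s,
        by have h : leadingOnes s + trailingZeros s + 2 ≤ n := hab; omega⟩ with hy₁
      set y₂ := flipBit s ⟨n - 1 - trailingZeros s,
        by have h : leadingOnes s + trailingZeros s + 2 ≤ n := hab; omega⟩ with hy₂
      have hne : y₁ ≠ y₂ := flips_ne s hab
      have hLy₁ : Ldom s + 1 ≤ Ldom y₁ := ldom_flip1 s hab
      have hLy₂ : Ldom s + 1 ≤ Ldom y₂ := ldom_flip2 s hab
      have hmut1 : globalMutation s y₁ =
          ((n : ℝ≥0∞))⁻¹ * (1 - ((n : ℝ≥0∞))⁻¹) ^ (n - 1) :=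
        globalMutation_apply_flip hn s _
      have hmut2 : globalMutation s y₂ =
          ((n : ℝ≥0∞))⁻¹ * (1 - ((n : ℝ≥0∞))⁻¹) ^ (n - 1) :=
        globalMutation_apply_flip hn s _
      have hg : ∀ s', h (updatePop LOTZ P s') ≤
          ((n - (L + 1) : ℕ) : ℝ≥0∞) * c + (if s' = y₁ ∨ s' = y₂ then 0 else c) := by
        intro s'
        rw [hh]
        dsimp only
        split
        · exact (by simp)
        · have hsup : L ≤ (updatePop LOTZ P s').sup Ldom := updatePop_sup_mono P s'
          by_cases hmem : s' = y₁ ∨ s' = y₂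
          · rw [if_pos hmem, add_zero]
            have hLs' : L + 1 ≤ Ldom s' := by
              rcases hmem with hm | hm
              · rw [hm]; omega
              · rw [hm]; omega
            have hin : s' ∈ updatePop LOTZ P s' := by
              apply updatePop_mem_of_not_dom
              intro z hz hdom
              have h1 : Ldom s' ≤ Ldom z := ldom_le_of_dom hdom
              have h2 : Ldom z ≤ L := by rw [hL]; exact Finset.le_sup hz
              omega
            have hsup' : L + 1 ≤ (updatePop LOTZ P s').sup Ldom :=
              le_trans hLs' (Finset.le_sup hin)
            apply mul_le_mul_left
            have hnat : (n - (updatePop LOTZ P s').sup Ldom : ℕ) ≤ (n - (L + 1) : ℕ) := by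
              omega
            exact_mod_cast hnat
          · rw [if_neg hmem]
            have hcast : ((n - (updatePop LOTZ P s').sup Ldom : ℕ) : ℝ≥0∞) ≤
                ((n - (L + 1) : ℕ) : ℝ≥0∞) + 1 := by
              have hnat : (n - (updatePop LOTZ P s').sup Ldom : ℕ) ≤ (n - (L + 1) : ℕ) + 1 := by
                omega
              exact_mod_cast hnat
            calc ((n - (updatePop LOTZ P s').sup Ldom : ℕ) : ℝ≥0∞) * c
                ≤ (((n - (L + 1) : ℕ) : ℝ≥0∞) + 1) * c := mul_le_mul_left hcast _
              _ = ((n - (L + 1) : ℕ) : ℝ≥0∞) * c + c := by ring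
      have hEs : (∑' s', globalMutation s s' * h (updatePop LOTZ P s')) ≤
          ((n - (L + 1) : ℕ) : ℝ≥0∞) * c +
            ∑' s', globalMutation s s' * (if s' = y₁ ∨ s' = y₂ then 0 else c) := by
        calc (∑' s', globalMutation s s' * h (updatePop LOTZ P s'))
            ≤ ∑' s', globalMutation s s' *
                (((n - (L + 1) : ℕ) : ℝ≥0∞) * c + (if s' = y₁ ∨ s' = y₂ then 0 else c)) :=
              ENNReal.tsum_le_tsum (fun s' => mul_le_mul_right (hg s') _)
          _ = (∑' s', globalMutation s s' * (((n - (L + 1) : ℕ) : ℝ≥0∞) * c)) +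
              ∑' s', globalMutation s s' * (if s' = y₁ ∨ s' = y₂ then 0 else c) := by
              rw [← ENNReal.tsum_add]
              apply tsum_congr
              intro s'
              ring
          _ = ((n - (L + 1) : ℕ) : ℝ≥0∞) * c +
              ∑' s', globalMutation s s' * (if s' = y₁ ∨ s' = y₂ then 0 else c) := by
              rw [ENNReal.tsum_mul_right, PMF.tsum_coe, one_mul]
      have hAB : (∑' s', globalMutation s s' * (if s' = y₁ ∨ s' = y₂ then 0 else c)) +
          (globalMutation s y₁ + globalMutation s y₂) * c = c := by
        have hB : (∑' s', globalMutation s s' * (if s' = y₁ ∨ s' = y₂ then c else 0)) =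
            (globalMutation s y₁ + globalMutation s y₂) * c := by
          rw [tsum_eq_sum (s := ({y₁, y₂} : Finset (BitString n)))
            (fun b hb => by
              rw [if_neg, mul_zero]
              intro hcon
              apply hb
              rcases hcon with hcon | hcon
              · rw [hcon]; exact Finset.mem_insert_self _ _
              · rw [hcon]; exact Finset.mem_insert_of_mem (Finset.mem_singleton_self _))]
          rw [Finset.sum_pair hne, if_pos (Or.inl rfl), if_pos (Or.inr rfl)]
          ring
        rw [← hB, ← ENNReal.tsum_add]
        have hpt : ∀ s', globalMutation s s' * (if s' = y₁ ∨ s' = y₂ then 0 else c) +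
            globalMutation s s' * (if s' = y₁ ∨ s' = y₂ then c else 0) =
            globalMutation s s' * c := by
          intro s'
          split <;> ring
        rw [tsum_congr hpt, ENNReal.tsum_mul_right, PMF.tsum_coe, one_mul]
      have hone : 1 ≤ (globalMutation s y₁ + globalMutation s y₂) * c := by
        rw [hmut1, hmut2, hc]
        exact enn_key n (by omega)
      calc (∑' s', globalMutation s s' * h (updatePop LOTZ P s')) + 1
          ≤ (((n - (L + 1) : ℕ) : ℝ≥0∞) * c +
              ∑' s', globalMutation s s' * (if s' = y₁ ∨ s' = y₂ then 0 else c)) +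
            (globalMutation s y₁ + globalMutation s y₂) * c := add_le_add hEs hone
        _ = ((n - (L + 1) : ℕ) : ℝ≥0∞) * c +
            ((∑' s', globalMutation s s' * (if s' = y₁ ∨ s' = y₂ then 0 else c)) +
              (globalMutation s y₁ + globalMutation s y₂) * c) := by ring
        _ = ((n - (L + 1) : ℕ) : ℝ≥0∞) * c + c := by rw [hAB]
        _ = ((n - L : ℕ) : ℝ≥0∞) * c := by
            have hnat : (n - L : ℕ) = (n - (L + 1) : ℕ) + 1 := by omega
            rw [hnat]
            push_cast
            ring
    have hsplit : (∑' s, (select (maxLSub P)) s *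
        ∑' s', globalMutation s s' * h (updatePop LOTZ P s')) + 1 =
        ∑' s, (select (maxLSub P)) s *
          ((∑' s', globalMutation s s' * h (updatePop LOTZ P s')) + 1) := by
      rw [tsum_congr (fun s => mul_add ((select (maxLSub P)) s) _ 1), ENNReal.tsum_add]
      simp only [mul_one, PMF.tsum_coe]
    rw [hsplit]
    calc (∑' s, (select (maxLSub P)) s *
          ((∑' s', globalMutation s s' * h (updatePop LOTZ P s')) + 1))
        ≤ ∑' s, (select (maxLSub P)) s * (((n - L : ℕ) : ℝ≥0∞) * c) := by
          apply ENNReal.tsum_le_tsum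
          intro s
          by_cases hz : (select (maxLSub P)) s = 0
          · rw [hz, zero_mul, zero_mul]
          · exact mul_le_mul_right (hparent s (by rwa [PMF.mem_support_iff])) _
      _ = ((n - L : ℕ) : ℝ≥0∞) * c := by
          rw [ENNReal.tsum_mul_right, PMF.tsum_coe, one_mul]


end EMO
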